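/- Let A = (a_{ji}) be a d × ν matrix of nonnegative integers, K a field, and π : K[w_1,…,w_ν] → K[q_1,…,q_d] the K-algebra homomorphism defined by π(w_i) = ∏_{j=1}^d q_j^{a_{ji}}. A finite set of moves B = {z_1,…,z_L} ⊆ ℤ^ν with A z_l = 0 for all l is a Markov basis for A if and only if the kernel of π is generated, as an ideal of K[w_1,…,w_ν], by the binomials W^{z_1^+} − W^{z_1^-}, …, W^{z_L^+} − W^{z_L^-}. -/

import Mathlib

open MvPolynomial

namespace DS

variable {ν L : ℕ} (z : Fin L → Fin ν → ℤ)

/-- One move (in either direction). -/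
def Step (a b : Fin ν →₀ ℕ) : Prop :=
  ∃ l : Fin L, (∀ i, (b i : ℤ) - (a i : ℤ) = z l i) ∨ (∀ i, (b i : ℤ) - (a i : ℤ) = - z l i)

lemma step_symm : Symmetric (Step z) := by
  rintro a b ⟨l, h | h⟩
  · exact ⟨l, Or.inr fun i => by have := h i; linarith⟩
  · exact ⟨l, Or.inl fun i => by have := h i; linarith⟩

/-- Connectivity by moves. -/
def Conn : (Fin ν →₀ ℕ) → (Fin ν →₀ ℕ) → Prop := Relation.ReflTransGen (Step z)

def connSetoid : Setoid (Fin ν →₀ ℕ) :=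
  ⟨Conn z, ⟨fun _ => Relation.ReflTransGen.refl,
    fun h => by haveI : Std.Symm (Step z) := ⟨step_symm z⟩; exact Relation.ReflTransGen.symmetric.symm _ _ h,
    fun h h' => Relation.ReflTransGen.trans h h'⟩⟩

abbrev Q := Quotient (connSetoid z)

def qmk (a : Fin ν →₀ ℕ) : Q z := Quotient.mk (connSetoid z) a

variable (K : Type*) [Field K]

/-- The class-counting map. -/
noncomputable def Tmap (f : MvPolynomial (Fin ν) K) : Q z →₀ K := Finsupp.mapDomain (qmk z) (AddMonoidAlgebra.coeff f)

lemma Tmap_monomial (m : Fin ν →₀ ℕ) (c : K) :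
    Tmap z K (monomial m c) = Finsupp.single (qmk z m) c := by
  rw [Tmap, ← single_eq_monomial, AddMonoidAlgebra.coeff_single, Finsupp.mapDomain_single]

lemma Tmap_add (f g : MvPolynomial (Fin ν) K) :
    Tmap z K (f + g) = Tmap z K f + Tmap z K g := Finsupp.mapDomain_add

lemma step_translate (v : Fin ν →₀ ℕ) {a b : Fin ν →₀ ℕ} (h : Step z a b) :
    Step z (v + a) (v + b) := by
  obtain ⟨l, h | h⟩ := h
  · exact ⟨l, Or.inl fun i => by have := h i; simp [Finsupp.add_apply]; linarith⟩
  · exact ⟨l, Or.inr fun i => by have := h i; simp [Finsupp.add_apply]; linarith⟩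

lemma conn_translate (v : Fin ν →₀ ℕ) {a b : Fin ν →₀ ℕ} (h : Conn z a b) :
    Conn z (v + a) (v + b) := by
  induction h with
  | refl => exact Relation.ReflTransGen.refl
  | tail _ hs ih => exact ih.tail (step_translate z v hs)

lemma Tmap_monomial_mul (v : Fin ν →₀ ℕ) (c : K) (f : MvPolynomial (Fin ν) K)
    (hf : Tmap z K f = 0) : Tmap z K (monomial v c * f) = 0 := by
  have key : ∀ g : MvPolynomial (Fin ν) K,
      Tmap z K (monomial v c * g) =
        Finsupp.mapDomain (Quotient.map (fun m => v + m) (fun a b h => conn_translate z v h))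
          (c • Tmap z K g) := by
    intro g
    induction g using MvPolynomial.induction_on' with
    | monomial u a =>
      rw [monomial_mul, Tmap_monomial, Tmap_monomial, Finsupp.smul_single,
        Finsupp.mapDomain_single]
      rfl
    | add p q hp hq =>
      rw [mul_add, Tmap_add, hp, hq, Tmap_add, smul_add, Finsupp.mapDomain_add]
  rw [key, hf, smul_zero, Finsupp.mapDomain_zero]

lemma Tmap_mul (g f : MvPolynomial (Fin ν) K) (hf : Tmap z K f = 0) :
    Tmap z K (g * f) = 0 := by
  induction g using MvPolynomial.induction_on' with
  | monomial u a => exact Tmap_monomial_mul z K u a f hf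
  | add p q hp hq => rw [add_mul, Tmap_add, hp, hq, add_zero]

/-- The kernel of `Tmap` as an ideal. -/
def kerT : Ideal (MvPolynomial (Fin ν) K) where
  carrier := {f | Tmap z K f = 0}
  add_mem' ha hb := by simp only [Set.mem_setOf_eq] at *; rw [Tmap_add, ha, hb, add_zero]
  zero_mem' := Finsupp.mapDomain_zero
  smul_mem' g f hf := by
    simp only [Set.mem_setOf_eq, smul_eq_mul] at *; exact Tmap_mul z K g f hf

/-- positive part of move `l` as a Finsupp. -/
noncomputable def posP (l : Fin L) : Fin ν →₀ ℕ := Finsupp.equivFunOnFinite.symm (fun i => (z l i).toNat)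

noncomputable def negP (l : Fin L) : Fin ν →₀ ℕ := Finsupp.equivFunOnFinite.symm (fun i => (- z l i).toNat)

@[simp] lemma posP_apply (l : Fin L) (i : Fin ν) : posP z l i = (z l i).toNat := rfl
@[simp] lemma negP_apply (l : Fin L) (i : Fin ν) : negP z l i = (- z l i).toNat := rfl

lemma prod_X_pow_univ {σ : Type*} [Fintype σ] {R : Type*} [CommSemiring R] (e : σ → ℕ) :
    (∏ i, (X i : MvPolynomial σ R) ^ e i) =
      monomial (Finsupp.equivFunOnFinite.symm e) (1 : R) := by
  set s : σ →₀ ℕ := Finsupp.equivFunOnFinite.symm e with hs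
  have hse : ∀ i, s i = e i := fun i => rfl
  rw [← prod_X_pow_eq_monomial]
  refine (Finset.prod_subset (Finset.subset_univ _) ?_).symm
  intro x _ hx
  rw [← hse x, Finsupp.notMem_support_iff.mp hx, pow_zero]

/-- The binomial generators. -/
noncomputable def Bgen (l : Fin L) : MvPolynomial (Fin ν) K :=
  monomial (posP z l) (1 : K) - monomial (negP z l) 1

lemma Bgen_eq (l : Fin L) :
    (∏ i, (X i : MvPolynomial (Fin ν) K) ^ (z l i).toNat)
      - ∏ i, (X i : MvPolynomial (Fin ν) K) ^ (- z l i).toNat = Bgen z K l := by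
  rw [Bgen, prod_X_pow_univ, prod_X_pow_univ]; rfl

lemma step_neg_pos (l : Fin L) : Step z (negP z l) (posP z l) := by
  refine ⟨l, Or.inl fun i => ?_⟩
  simp only [posP_apply, negP_apply]
  omega

lemma Tmap_sub (f g : MvPolynomial (Fin ν) K) :
    Tmap z K (f - g) = Tmap z K f - Tmap z K g := by
  have := map_sub (Finsupp.mapDomain.addMonoidHom (qmk z)) (AddMonoidAlgebra.coeff f) (AddMonoidAlgebra.coeff g)
  simpa only [Finsupp.mapDomain.addMonoidHom_apply, Tmap, AddMonoidAlgebra.coeff_sub] using this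

lemma span_le_kerT : Ideal.span (Set.range (Bgen z K)) ≤ kerT z K := by
  rw [Ideal.span_le]
  rintro _ ⟨l, rfl⟩
  show Tmap z K _ = 0
  have hq : qmk z (negP z l) = qmk z (posP z l) :=
    Quotient.sound (Relation.ReflTransGen.single (step_neg_pos z l))
  rw [Bgen, Tmap_sub, Tmap_monomial, Tmap_monomial, hq, sub_self]

lemma mem_span_of_step {a b : Fin ν →₀ ℕ} (c : K) (h : Step z a b) :
    (monomial a c - monomial b c : MvPolynomial (Fin ν) K) ∈
      Ideal.span (Set.range (Bgen z K)) := by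
  obtain ⟨l, h | h⟩ := h
  · set v : Fin ν →₀ ℕ := a - negP z l with hv
    have hva : v + negP z l = a := by
      ext i
      have := h i
      simp only [Finsupp.add_apply, hv, Finsupp.tsub_apply, negP_apply]
      omega
    have hvb : v + posP z l = b := by
      ext i
      have := h i
      simp only [Finsupp.add_apply, hv, Finsupp.tsub_apply, negP_apply, posP_apply]
      omega
    have key : (monomial a c - monomial b c : MvPolynomial (Fin ν) K)
        = (- monomial v c) * Bgen z K l := by
      rw [Bgen, neg_mul, mul_sub, monomial_mul, monomial_mul, mul_one, hva, hvb, neg_sub]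
    rw [key]
    exact Ideal.mul_mem_left _ _ (Ideal.subset_span ⟨l, rfl⟩)
  · set v : Fin ν →₀ ℕ := b - negP z l with hv
    have hvb : v + negP z l = b := by
      ext i
      have := h i
      simp only [Finsupp.add_apply, hv, Finsupp.tsub_apply, negP_apply]
      omega
    have hva : v + posP z l = a := by
      ext i
      have := h i
      simp only [Finsupp.add_apply, hv, Finsupp.tsub_apply, negP_apply, posP_apply]
      omega
    have key : (monomial a c - monomial b c : MvPolynomial (Fin ν) K)
        = monomial v c * Bgen z K l := by
      rw [Bgen, mul_sub, monomial_mul, monomial_mul, mul_one, hva, hvb]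
    rw [key]
    exact Ideal.mul_mem_left _ _ (Ideal.subset_span ⟨l, rfl⟩)

lemma mem_span_of_conn {a b : Fin ν →₀ ℕ} (c : K) (h : Conn z a b) :
    (monomial a c - monomial b c : MvPolynomial (Fin ν) K) ∈
      Ideal.span (Set.range (Bgen z K)) := by
  induction h with
  | refl => rw [sub_self]; exact Ideal.zero_mem _
  | tail _ hs ih =>
    rename_i b' b _
    have : (monomial a c - monomial b c : MvPolynomial (Fin ν) K)
        = (monomial a c - monomial b' c) + (monomial b' c - monomial b c) := by ring
    rw [this]
    exact Ideal.add_mem _ ih (mem_span_of_step z K c hs)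

lemma kerT_le_span : kerT z K ≤ Ideal.span (Set.range (Bgen z K)) := by
  intro f hf
  have hf0 : Tmap z K f = 0 := hf
  set F : (Fin ν →₀ ℕ) → (Fin ν →₀ ℕ) := fun m => (qmk z m).out with hF
  have hmd : Finsupp.mapDomain F (AddMonoidAlgebra.coeff f) = 0 := by
    have : F = Quotient.out ∘ qmk z := rfl
    rw [this, Finsupp.mapDomain_comp]
    show Finsupp.mapDomain _ (Tmap z K f) = 0
    rw [hf0, Finsupp.mapDomain_zero]
  have hconn : ∀ m : Fin ν →₀ ℕ, Conn z m (F m) := by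
    intro m
    exact (connSetoid z).symm (Quotient.exact (Quotient.out_eq (qmk z m)))
  have e1 : (AddMonoidAlgebra.coeff f).sum (fun (m : Fin ν →₀ ℕ) (c : K) =>
      (monomial m c : MvPolynomial (Fin ν) K)) = f :=
    AddMonoidAlgebra.coeff_injective (by
      rw [AddMonoidAlgebra.coeff_finsuppSum]; exact Finsupp.sum_single _)
  have h2 : AddMonoidAlgebra.coeff ((AddMonoidAlgebra.coeff f).sum
      (fun m c => (monomial (F m) c : MvPolynomial (Fin ν) K)))
      = Finsupp.mapDomain F (AddMonoidAlgebra.coeff f) := by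
    rw [AddMonoidAlgebra.coeff_finsuppSum]; rfl
  have e2 : (AddMonoidAlgebra.coeff f).sum
      (fun m c => (monomial (F m) c : MvPolynomial (Fin ν) K)) = 0 := by
    rw [← AddMonoidAlgebra.coeff_eq_zero, h2, hmd]
  have hf_eq : f = (AddMonoidAlgebra.coeff f).sum
      (fun m c => (monomial m c - monomial (F m) c : MvPolynomial (Fin ν) K)) := by
    rw [Finsupp.sum_sub, e1, e2, sub_zero]
  rw [hf_eq]
  exact Ideal.sum_mem _ (fun m _ => mem_span_of_conn z K _ (hconn m))

lemma span_eq_kerT : Ideal.span (Set.range (Bgen z K)) = kerT z K :=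
  le_antisymm (span_le_kerT z K) (kerT_le_span z K)

section Pi

variable {d : ℕ} (A : Fin d → Fin ν → ℕ)

noncomputable def Ahat (m : Fin ν →₀ ℕ) : Fin d →₀ ℕ :=
  Finsupp.equivFunOnFinite.symm (fun j => ∑ i, A j i * m i)

@[simp] lemma Ahat_apply (m : Fin ν →₀ ℕ) (j : Fin d) :
    Ahat A m j = ∑ i, A j i * m i := rfl

lemma piHom_monomial (m : Fin ν →₀ ℕ) (c : K) :
    (aeval (fun i : Fin ν => ∏ j, (X j : MvPolynomial (Fin d) K) ^ A j i) :
        MvPolynomial (Fin ν) K →ₐ[K] MvPolynomial (Fin d) K) (monomial m c)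
      = monomial (Ahat A m) c := by
  rw [aeval_monomial, Finsupp.prod]
  have h1 : (∏ i ∈ m.support, (∏ j, (X j : MvPolynomial (Fin d) K) ^ A j i) ^ m i)
      = ∏ i, (∏ j, (X j : MvPolynomial (Fin d) K) ^ A j i) ^ m i := by
    refine Finset.prod_subset (Finset.subset_univ _) ?_
    intro x _ hx
    rw [Finsupp.notMem_support_iff.mp hx, pow_zero]
  have h2 : (∏ i, (∏ j, (X j : MvPolynomial (Fin d) K) ^ A j i) ^ m i)
      = ∏ j, (X j : MvPolynomial (Fin d) K) ^ (∑ i, A j i * m i) :=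
    calc (∏ i, (∏ j, (X j : MvPolynomial (Fin d) K) ^ A j i) ^ m i)
        = ∏ i, ∏ j, (X j : MvPolynomial (Fin d) K) ^ (A j i * m i) := by
          refine Finset.prod_congr rfl fun i _ => ?_
          rw [← Finset.prod_pow]
          exact Finset.prod_congr rfl fun j _ => (pow_mul _ _ _).symm
      _ = ∏ j, ∏ i, (X j : MvPolynomial (Fin d) K) ^ (A j i * m i) := Finset.prod_comm
      _ = ∏ j, (X j : MvPolynomial (Fin d) K) ^ (∑ i, A j i * m i) :=
          Finset.prod_congr rfl fun j _ => Finset.prod_pow_eq_pow_sum _ _ _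
  rw [h1, h2, prod_X_pow_univ, algebraMap_eq, C_mul_monomial, mul_one]
  rfl

lemma piHom_eq_mapDomain (f : MvPolynomial (Fin ν) K) :
    AddMonoidAlgebra.coeff ((aeval (fun i : Fin ν => ∏ j, (X j : MvPolynomial (Fin d) K) ^ A j i) :
        MvPolynomial (Fin ν) K →ₐ[K] MvPolynomial (Fin d) K) f)
      = Finsupp.mapDomain (Ahat A) (AddMonoidAlgebra.coeff f) := by
  induction f using MvPolynomial.induction_on' with
  | monomial u a => rw [piHom_monomial, ← single_eq_monomial, ← single_eq_monomial,
      AddMonoidAlgebra.coeff_single, AddMonoidAlgebra.coeff_single, Finsupp.mapDomain_single]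
  | add p q hp hq => rw [map_add, AddMonoidAlgebra.coeff_add, AddMonoidAlgebra.coeff_add, hp, hq,
      Finsupp.mapDomain_add]

variable (hz : ∀ l j, ∑ i, (A j i : ℤ) * z l i = 0)
include hz

lemma Ahat_pos_eq_neg (l : Fin L) : Ahat A (posP z l) = Ahat A (negP z l) := by
  ext j
  have hzj := hz l j
  have key : (((∑ i, A j i * posP z l i : ℕ) : ℤ)) = ((∑ i, A j i * negP z l i : ℕ) : ℤ) := by
    push_cast
    have : ∀ i ∈ Finset.univ, (A j i : ℤ) * ((posP z l i : ℕ) : ℤ)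
        - (A j i : ℤ) * ((negP z l i : ℕ) : ℤ) = (A j i : ℤ) * z l i := by
      intro i _
      rw [← mul_sub]
      congr 1
      simp only [posP_apply, negP_apply]
      omega
    have h := Finset.sum_congr rfl this
    rw [Finset.sum_sub_distrib] at h
    rw [hzj] at h
    linarith
  exact_mod_cast key

lemma Ahat_step {a b : Fin ν →₀ ℕ} (h : Step z a b) : Ahat A a = Ahat A b := by
  ext j
  have hzj := hz
  have key : (((∑ i, A j i * a i : ℕ) : ℤ)) = ((∑ i, A j i * b i : ℕ) : ℤ) := by
    push_cast
    obtain ⟨l, h | h⟩ := h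
    · have h2 : ∑ i, ((A j i : ℤ) * (b i : ℤ) - (A j i : ℤ) * (a i : ℤ))
          = ∑ i, (A j i : ℤ) * z l i :=
        Finset.sum_congr rfl fun i _ => by rw [← mul_sub, h i]
      rw [Finset.sum_sub_distrib, hzj l j] at h2
      linarith
    · have h2 : ∑ i, ((A j i : ℤ) * (b i : ℤ) - (A j i : ℤ) * (a i : ℤ))
          = ∑ i, -((A j i : ℤ) * z l i) :=
        Finset.sum_congr rfl fun i _ => by rw [← mul_sub, h i, mul_neg]
      rw [Finset.sum_sub_distrib, Finset.sum_neg_distrib, hzj l j] at h2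
      linarith
  exact_mod_cast key

lemma Ahat_conn {a b : Fin ν →₀ ℕ} (h : Conn z a b) : Ahat A a = Ahat A b := by
  induction h with
  | refl => rfl
  | tail _ hs ih => exact ih.trans (Ahat_step z A hz hs)


/-- `Ahat` descends to connectivity classes. -/
noncomputable def qlift : Q z → (Fin d →₀ ℕ) :=
  Quotient.lift (Ahat A) (fun _ _ h => Ahat_conn z A hz h)

lemma qlift_comp : (qlift z A hz) ∘ (qmk z) = Ahat A := rfl

/-- The Markov-basis property, phrased as in the theorem statement. -/
def Markov (A : Fin d → Fin ν → ℕ) : Prop :=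
  ∀ x y : Fin ν → ℕ, (∀ j, ∑ i, A j i * x i = ∑ i, A j i * y i) →
    ∃ (N : ℕ) (path : ℕ → Fin ν → ℕ), path 0 = x ∧ path N = y ∧
      ∀ m < N, ∃ l : Fin L,
        (∀ i, (path (m + 1) i : ℤ) - (path m i : ℤ) = z l i) ∨
        (∀ i, (path (m + 1) i : ℤ) - (path m i : ℤ) = - z l i)

omit hz in
lemma conn_of_markov (H : Markov z A) {a b : Fin ν →₀ ℕ}
    (hab : Ahat A a = Ahat A b) : Conn z a b := by
  obtain ⟨N, p, h0, hN, hstep⟩ := H (⇑a) (⇑b)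
    (fun j => by simpa using DFunLike.congr_fun hab j)
  have key : ∀ k, k ≤ N → Conn z a (Finsupp.equivFunOnFinite.symm (p k)) := by
    intro k
    induction k with
    | zero =>
      intro _
      rw [h0, Finsupp.equivFunOnFinite_symm_coe]
      exact Relation.ReflTransGen.refl
    | succ k ih =>
      intro hk
      refine (ih (by omega)).tail ?_
      obtain ⟨l, hl⟩ := hstep k (by omega)
      exact ⟨l, hl⟩
  have hfin := key N le_rfl
  rwa [hN, Finsupp.equivFunOnFinite_symm_coe] at hfin

lemma qlift_injective (H : Markov z A) : Function.Injective (qlift z A hz) := by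
  intro qa qb
  induction qa using Quotient.ind
  induction qb using Quotient.ind
  intro h
  exact Quotient.sound (conn_of_markov z A H h)

omit hz in
lemma path_of_conn {a b : Fin ν →₀ ℕ} (h : Conn z a b) :
    ∃ (N : ℕ) (path : ℕ → Fin ν → ℕ), path 0 = ⇑a ∧ path N = ⇑b ∧
      ∀ m < N, ∃ l : Fin L,
        (∀ i, (path (m + 1) i : ℤ) - (path m i : ℤ) = z l i) ∨
        (∀ i, (path (m + 1) i : ℤ) - (path m i : ℤ) = - z l i) := by
  induction h with
  | refl => exact ⟨0, fun _ => ⇑a, rfl, rfl, fun m hm => absurd hm (Nat.not_lt_zero m)⟩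
  | @tail b' b _ hs ih =>
    obtain ⟨N, p, h0, hN, hstep⟩ := ih
    refine ⟨N + 1, fun k => if k ≤ N then p k else ⇑b, ?_, ?_, ?_⟩
    · dsimp only
      rw [if_pos (Nat.zero_le N)]; exact h0
    · dsimp only
      rw [if_neg (by omega)]
    · dsimp only
      intro m hm
      rcases Nat.lt_or_ge m N with hmN | hmN
      · obtain ⟨l, hl⟩ := hstep m hmN
        refine ⟨l, ?_⟩
        rw [if_pos (by omega), if_pos (by omega)]
        exact hl
      · obtain ⟨l, hl⟩ := hs
        refine ⟨l, ?_⟩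
        rw [if_neg (by omega : ¬ (m + 1 ≤ N)), if_pos (by omega : m ≤ N),
          show m = N by omega, hN]
        exact hl

end Pi
end DS


/-- Diaconis–Sturmfels: Let A = (a_{ji}) be a d × ν matrix of
nonnegative integers, K a field, and π : K[w_1,…,w_ν] → K[q_1,…,q_d] the
K-algebra homomorphism with π(w_i) = ∏_j q_j^{a_{ji}}.  A finite set of moves
B = {z_1,…,z_L} ⊆ ℤ^ν with A z_l = 0 is a Markov basis for A (i.e. any two
nonnegative integer vectors x, y with A x = A y can be connected by a finite
sequence of steps ±z_l staying in ℕ^ν) if and only if ker π is generated, as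
an ideal, by the binomials W^{z_l^+} − W^{z_l^-}, l = 1,…,L. -/
theorem stmt_0 (d ν : ℕ) (A : Fin d → Fin ν → ℕ) (K : Type*) [Field K]
    (L : ℕ) (z : Fin L → Fin ν → ℤ)
    (hz : ∀ l j, ∑ i, (A j i : ℤ) * z l i = 0) :
    ((∀ x y : Fin ν → ℕ, (∀ j, ∑ i, A j i * x i = ∑ i, A j i * y i) →
        ∃ (N : ℕ) (path : ℕ → Fin ν → ℕ), path 0 = x ∧ path N = y ∧
          ∀ m < N, ∃ l : Fin L,
            (∀ i, (path (m + 1) i : ℤ) - (path m i : ℤ) = z l i) ∨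
            (∀ i, (path (m + 1) i : ℤ) - (path m i : ℤ) = - z l i))
      ↔
      RingHom.ker
          (aeval (fun i : Fin ν => ∏ j, (X j : MvPolynomial (Fin d) K) ^ A j i) :
            MvPolynomial (Fin ν) K →ₐ[K] MvPolynomial (Fin d) K)
        = Ideal.span (Set.range fun l : Fin L =>
            (∏ i, (X i : MvPolynomial (Fin ν) K) ^ (z l i).toNat)
              - ∏ i, (X i : MvPolynomial (Fin ν) K) ^ (- z l i).toNat)) := by
  classical
  have hset : (Set.range fun l : Fin L =>
      (∏ i, (X i : MvPolynomial (Fin ν) K) ^ (z l i).toNat)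
        - ∏ i, (X i : MvPolynomial (Fin ν) K) ^ (- z l i).toNat)
      = Set.range (DS.Bgen z K) := by
    have hfun : (fun l : Fin L =>
        (∏ i, (X i : MvPolynomial (Fin ν) K) ^ (z l i).toNat)
          - ∏ i, (X i : MvPolynomial (Fin ν) K) ^ (- z l i).toNat) = DS.Bgen z K :=
      funext fun l => DS.Bgen_eq z K l
    rw [hfun]
  rw [hset]
  constructor
  · intro H
    apply le_antisymm
    · rw [DS.span_eq_kerT]
      intro f hf
      have hf' : Finsupp.mapDomain (DS.Ahat A) (AddMonoidAlgebra.coeff f) = 0 := by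
        rw [← DS.piHom_eq_mapDomain, AddMonoidAlgebra.coeff_eq_zero]
        exact RingHom.mem_ker.mp hf
      show DS.Tmap z K f = 0
      have hfac : Finsupp.mapDomain (DS.Ahat A) (AddMonoidAlgebra.coeff f)
          = Finsupp.mapDomain (DS.qlift z A hz) (DS.Tmap z K f) := by
        rw [← DS.qlift_comp z A hz, Finsupp.mapDomain_comp]
        rfl
      refine Finsupp.mapDomain_injective (DS.qlift_injective z A hz H) ?_
      rw [← hfac, hf', Finsupp.mapDomain_zero]
    · rw [Ideal.span_le]
      rintro _ ⟨l, rfl⟩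
      simp only [SetLike.mem_coe, RingHom.mem_ker]
      rw [DS.Bgen, map_sub, DS.piHom_monomial, DS.piHom_monomial,
        DS.Ahat_pos_eq_neg z A hz l, sub_self]
  · intro hEq x y hxy
    set a := Finsupp.equivFunOnFinite.symm x with ha
    set b := Finsupp.equivFunOnFinite.symm y with hb
    have hAB : DS.Ahat A a = DS.Ahat A b := by
      ext j
      show ∑ i, A j i * a i = ∑ i, A j i * b i
      exact hxy j
    have hker : (monomial a (1:K) - monomial b 1) ∈ RingHom.ker
        (aeval (fun i : Fin ν => ∏ j, (X j : MvPolynomial (Fin d) K) ^ A j i) :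
          MvPolynomial (Fin ν) K →ₐ[K] MvPolynomial (Fin d) K) := by
      rw [RingHom.mem_ker, map_sub, DS.piHom_monomial, DS.piHom_monomial, hAB, sub_self]
    rw [hEq, DS.span_eq_kerT] at hker
    have hT : DS.Tmap z K ((monomial a) (1:K) - (monomial b) 1) = 0 := hker
    rw [DS.Tmap_sub, DS.Tmap_monomial, DS.Tmap_monomial] at hT
    have hq : DS.qmk z a = DS.qmk z b := by
      by_contra hne
      have h1 := DFunLike.congr_fun hT (DS.qmk z a)
      rw [Finsupp.sub_apply, Finsupp.single_apply, Finsupp.single_apply, if_pos rfl,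
        if_neg (Ne.symm hne), sub_zero, Finsupp.zero_apply] at h1
      exact one_ne_zero h1
    have hconn : DS.Conn z a b := Quotient.exact hq
    obtain ⟨N, p, h0, hN, hstep⟩ := DS.path_of_conn z hconn
    refine ⟨N, p, ?_, ?_, hstep⟩
    · rw [h0]
      exact Finsupp.equivFunOnFinite.apply_symm_apply x
    · rw [hN]
      exact Finsupp.equivFunOnFinite.apply_symm_apply y
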